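/- For any prime p and positive integer a, the Bell polynomial satisfies B_{p^a}(x) ≡ ∑_{r=0}^{a} x^{p^r} modulo p·Z_p[x]. -/

import Mathlib

/-- Stirling numbers of the second kind. -/
def stirling2 : ℕ → ℕ → ℕ
  | 0, 0 => 1
  | 0, _ + 1 => 0
  | _ + 1, 0 => 0
  | n + 1, k + 1 => (k + 1) * stirling2 n (k + 1) + stirling2 n k

/-- The Bell polynomial `B_n(x) = ∑_{k=0}^n S(n,k) x^k`. -/
noncomputable def bellPoly (R : Type*) [CommRing R] (n : ℕ) : Polynomial R :=
  ∑ k ∈ Finset.range (n + 1), Polynomial.C (stirling2 n k : R) * Polynomial.X ^ k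

namespace BellAux

open Polynomial Finset

lemma stirling2_eq_zero_of_lt : ∀ {n k : ℕ}, n < k → stirling2 n k = 0 := by
  intro n
  induction n with
  | zero => intro k hk; obtain ⟨m, rfl⟩ := Nat.exists_eq_add_of_lt hk; rfl
  | succ n ih =>
    intro k hk
    obtain ⟨k, rfl⟩ : ∃ k', k = k' + 1 := ⟨k - 1, by omega⟩
    show (k + 1) * stirling2 n (k + 1) + stirling2 n k = 0
    rw [ih (by omega), ih (by omega)]; ring

lemma stirling2_self (n : ℕ) : stirling2 n n = 1 := by
  induction n with
  | zero => rfl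
  | succ n ih =>
    show (n + 1) * stirling2 n (n + 1) + stirling2 n n = 1
    rw [stirling2_eq_zero_of_lt (by omega), ih]; ring

/-- The Bell operator `f ↦ X (f + f')` as a linear endomorphism. -/
noncomputable def bellOp (R : Type*) [CommRing R] : Module.End R (Polynomial R) :=
  LinearMap.mulLeft R (X : Polynomial R) ∘ₗ (LinearMap.id + Polynomial.derivative)

variable {R : Type*} [CommRing R]

lemma bellOp_apply (f : R[X]) : bellOp R f = X * (f + derivative f) := rfl

lemma bellPoly_succ (n : ℕ) :
    bellPoly R (n + 1) = X * (bellPoly R n + derivative (bellPoly R n)) := by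
  have hXd : X * derivative (bellPoly R n)
      = ∑ k ∈ range (n + 1), C ((stirling2 n k : R) * k) * X ^ k := by
    rw [bellPoly, derivative_sum, Finset.mul_sum]
    refine Finset.sum_congr rfl fun k _ => ?_
    rw [derivative_C_mul_X_pow]
    rcases k with _ | k
    · simp
    · have : k + 1 - 1 = k := rfl
      rw [this]
      ring
  have hXd' : X * derivative (bellPoly R n)
      = ∑ k ∈ range (n + 1), C ((stirling2 n (k+1) : R) * (k+1)) * X ^ (k+1) := by
    rw [hXd, Finset.sum_range_succ']
    rw [Finset.sum_range_succ]
    simp [stirling2_eq_zero_of_lt (Nat.lt_succ_self n)]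
  have hXB : X * bellPoly R n = ∑ k ∈ range (n + 1), C (stirling2 n k : R) * X ^ (k+1) := by
    rw [bellPoly, Finset.mul_sum]
    refine Finset.sum_congr rfl fun k _ => ?_
    ring
  rw [mul_add, hXd', hXB, ← Finset.sum_add_distrib, bellPoly]
  rw [Finset.sum_range_succ']
  have h0 : (C ((stirling2 (n+1) 0 : R)) * X ^ 0) = 0 := by
    show (C ((0 : ℕ) : R)) * X ^ 0 = 0; simp
  rw [h0, add_zero]
  refine Finset.sum_congr rfl fun k _ => ?_
  have : stirling2 (n+1) (k+1) = (k + 1) * stirling2 n (k + 1) + stirling2 n k := rfl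
  rw [this]
  push_cast
  simp only [C_add, C_mul, map_natCast]
  ring

lemma bellPoly_succ' (n : ℕ) : bellPoly R (n + 1) = bellOp R (bellPoly R n) :=
  bellPoly_succ n

lemma bellPoly_eq_iterate (n : ℕ) : bellPoly R n = ((bellOp R) ^ n) 1 := by
  induction n with
  | zero => simp [bellPoly, stirling2]
  | succ n ih => rw [bellPoly_succ', ih, pow_succ', Module.End.mul_apply]

lemma bellOp_mul (g f : R[X]) :
    bellOp R (g * f) = g * bellOp R f + X * derivative g * f := by
  simp only [bellOp_apply, derivative_mul]
  ring

lemma bellOp_comm_mulLeft (g : R[X]) (hg : derivative g = 0) :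
    Commute (LinearMap.mulLeft R g) (bellOp R) := by
  refine LinearMap.ext fun f => ?_
  simp only [Module.End.mul_apply, LinearMap.mulLeft_apply, bellOp_mul, hg]
  ring

lemma bellOp_comm_X :
    bellOp R * LinearMap.mulLeft R (X : R[X])
      = LinearMap.mulLeft R (X : R[X]) * (bellOp R + 1) := by
  refine LinearMap.ext fun f => ?_
  simp only [Module.End.mul_apply, LinearMap.mulLeft_apply, LinearMap.add_apply,
    Module.End.one_apply, bellOp_mul, derivative_X]
  ring

lemma bellOp_pow_comm_X (k : ℕ) :
    bellOp R ^ k * LinearMap.mulLeft R (X : R[X])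
      = LinearMap.mulLeft R (X : R[X]) * (bellOp R + 1) ^ k := by
  induction k with
  | zero => simp
  | succ k ih =>
    rw [pow_succ', mul_assoc, ih, ← mul_assoc, bellOp_comm_X, mul_assoc, ← pow_succ']

lemma endExt {K : Type*} [CommRing K] {f g : Module.End K (Polynomial K)}
    (h : ∀ n : ℕ, f ((X : K[X]) ^ n) = g ((X : K[X]) ^ n)) : f = g := by
  apply Polynomial.lhom_ext'
  intro n
  apply LinearMap.ext
  intro r
  have hm : (monomial n r : K[X]) = r • (X : K[X]) ^ n := by
    rw [smul_eq_C_mul, C_mul_X_pow_eq_monomial]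
  simp only [LinearMap.comp_apply, hm, map_smul, h n]

section Fp

variable (p : ℕ) [Fact p.Prime]

lemma descPochhammer_p : descPochhammer (ZMod p) p = X ^ p - X := by
  have hp2 : 1 < p := (Fact.out : p.Prime).one_lt
  have hm1 : (descPochhammer (ZMod p) p).Monic := monic_descPochhammer _ _
  have hm2 : ((X : (ZMod p)[X]) ^ p - X).Monic := by
    apply monic_X_pow_sub
    simpa using (Nat.one_lt_cast.mpr hp2 : (1 : WithBot ℕ) < p)
  have hd1 : (descPochhammer (ZMod p) p).degree = p := by
    rw [Polynomial.degree_eq_natDegree hm1.ne_zero, descPochhammer_natDegree]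
  have hd2 : ((X : (ZMod p)[X]) ^ p - X).degree = (p : WithBot ℕ) := by
    rw [degree_sub_eq_left_of_degree_lt, degree_X_pow]
    rw [degree_X_pow, degree_X]
    exact_mod_cast hp2
  have hsub : (descPochhammer (ZMod p) p - ((X : (ZMod p)[X]) ^ p - X)).natDegree < p := by
    have h : (descPochhammer (ZMod p) p - ((X : (ZMod p)[X]) ^ p - X)).degree < (p : WithBot ℕ) := by
      have := degree_sub_lt (hd1.trans hd2.symm) hm1.ne_zero
        (by rw [hm1.leadingCoeff, hm2.leadingCoeff])
      rwa [hd1] at this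
    rcases eq_or_ne (descPochhammer (ZMod p) p - ((X : (ZMod p)[X]) ^ p - X)) 0 with h0 | h0
    · rw [h0]; simpa using by omega
    · exact (natDegree_lt_iff_degree_lt h0).mpr h
  have heval : ∀ x : ZMod p, (descPochhammer (ZMod p) p - (X ^ p - X)).eval x = 0 := by
    intro x
    obtain ⟨k, hk, rfl⟩ : ∃ k, k < p ∧ ((k : ℕ) : ZMod p) = x :=
      ⟨x.val, x.val_lt, ZMod.natCast_rightInverse x⟩
    rw [eval_sub, descPochhammer_eval_eq_descFactorial, Nat.descFactorial_of_lt hk]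
    simp [ZMod.pow_card]
  have : (descPochhammer (ZMod p) p - (X ^ p - X)) = 0 := by
    apply Polynomial.eq_zero_of_natDegree_lt_card_of_eval_eq_zero _
      (f := (id : ZMod p → ZMod p)) Function.injective_id heval
    simpa [ZMod.card] using hsub
  linear_combination this

lemma stirling_desc (R : Type*) [CommRing R] (n : ℕ) :
    (X : R[X]) ^ n = ∑ k ∈ range (n + 1), C (stirling2 n k : R) * descPochhammer R k := by
  induction n with
  | zero => simp [stirling2]
  | succ n ih =>
    have hX : ∀ k : ℕ, (X : R[X]) * descPochhammer R k
        = descPochhammer R (k + 1) + C ((k : R)) * descPochhammer R k := by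
      intro k
      rw [descPochhammer_succ_right, C_eq_natCast]
      ring
    rw [pow_succ, ih, Finset.sum_mul]
    have hstep : ∀ k ∈ range (n + 1), C (stirling2 n k : R) * descPochhammer R k * X
        = C (stirling2 n k : R) * descPochhammer R (k + 1)
          + C ((stirling2 n k : R) * k) * descPochhammer R k := by
      intro k _
      rw [mul_comm _ (X : R[X]), ← mul_assoc, mul_comm (X : R[X]), mul_assoc, hX k]
      rw [C_mul]
      ring
    rw [Finset.sum_congr rfl hstep, Finset.sum_add_distrib]
    have hB : ∑ k ∈ range (n + 1), C ((stirling2 n k : R) * k) * descPochhammer R k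
        = ∑ k ∈ range (n + 1), C ((stirling2 n (k + 1) : R) * (k + 1)) * descPochhammer R (k + 1) := by
      rw [Finset.sum_range_succ']
      rw [Finset.sum_range_succ]
      simp [stirling2_eq_zero_of_lt (Nat.lt_succ_self n)]
    rw [hB, ← Finset.sum_add_distrib]
    rw [Finset.sum_range_succ' (fun k => C (stirling2 (n+1) k : R) * descPochhammer R k) (n + 1)]
    have h0 : C ((stirling2 (n + 1) 0 : R)) * descPochhammer R 0 = 0 := by
      show C (((0 : ℕ) : R)) * descPochhammer R 0 = 0; simp
    rw [h0, add_zero]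
    refine Finset.sum_congr rfl fun k _ => ?_
    have : stirling2 (n + 1) (k + 1) = (k + 1) * stirling2 n (k + 1) + stirling2 n k := rfl
    rw [this]
    push_cast
    simp only [C_add, C_mul, map_natCast]
    ring

lemma desc_coeffs_zero : ∀ (m : ℕ) (c : ℕ → ZMod p),
    (∑ k ∈ range m, C (c k) * descPochhammer (ZMod p) k) = 0 → ∀ k < m, c k = 0 := by
  intro m
  induction m with
  | zero => intro c _ k hk; omega
  | succ m ih =>
    intro c hc k hk
    have hcm : c m = 0 := by
      have := congrArg (fun q => Polynomial.coeff q m) hc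
      simp only [Polynomial.finset_sum_coeff, coeff_zero] at this
      have hcm1 : (descPochhammer (ZMod p) m).coeff m = 1 := by
        simpa [descPochhammer_natDegree] using (monic_descPochhammer (ZMod p) m).coeff_natDegree
      rw [Finset.sum_eq_single m] at this
      · rwa [coeff_C_mul, hcm1, mul_one] at this
      · intro b hb hbm
        have hb' : b < m := by
          have := Finset.mem_range.mp hb; omega
        rw [coeff_C_mul, coeff_eq_zero_of_natDegree_lt, mul_zero]
        rw [descPochhammer_natDegree]; exact hb'
      · intro h; exact absurd (Finset.self_mem_range_succ m) h
    have hsum : (∑ k ∈ range m, C (c k) * descPochhammer (ZMod p) k) = 0 := by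
      rw [Finset.sum_range_succ, hcm] at hc
      simpa using hc
    rcases Nat.lt_succ_iff_lt_or_eq.mp hk with h | h
    · exact ih c hsum k h
    · rw [h]; exact hcm

lemma bellPoly_p : bellPoly (ZMod p) p = X ^ p + X := by
  have hp2 : 1 < p := (Fact.out : p.Prime).one_lt
  have h := stirling_desc (ZMod p) p
  rw [Finset.sum_range_succ, stirling2_self, descPochhammer_p] at h
  have hX : (∑ k ∈ range p, C ((stirling2 p k : ZMod p)) * descPochhammer (ZMod p) k) = X := by
    have := h
    rw [Nat.cast_one, map_one, one_mul] at this
    linear_combination -this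
  set c : ℕ → ZMod p := fun k => (stirling2 p k : ZMod p) - (if k = 1 then 1 else 0) with hc
  have hzero : (∑ k ∈ range p, C (c k) * descPochhammer (ZMod p) k) = 0 := by
    simp only [hc, C_sub, sub_mul, Finset.sum_sub_distrib]
    rw [hX]
    have : (∑ k ∈ range p, C (if k = 1 then (1:ZMod p) else 0) * descPochhammer (ZMod p) k) = X := by
      rw [Finset.sum_eq_single 1]
      · simp [descPochhammer_one]
      · intro b _ hb; simp [hb]
      · intro hmem; exact absurd (Finset.mem_range.mpr hp2) hmem
    rw [this, sub_self]
  have hco := desc_coeffs_zero p p c hzero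
  have hSk : ∀ k < p, (stirling2 p k : ZMod p) = if k = 1 then 1 else 0 := by
    intro k hk
    have := hco k hk
    rw [hc] at this
    simpa [sub_eq_zero] using this
  rw [bellPoly, Finset.sum_range_succ, stirling2_self, Nat.cast_one, map_one, one_mul]
  have : (∑ k ∈ range p, C ((stirling2 p k : ZMod p)) * X ^ k) = X := by
    rw [Finset.sum_congr rfl (fun k hk => by rw [hSk k (Finset.mem_range.mp hk)])]
    rw [Finset.sum_eq_single 1]
    · simp
    · intro b _ hb; simp [hb]
    · intro hmem; exact absurd (Finset.mem_range.mpr hp2) hmem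
  rw [this, add_comm]

noncomputable instance : CharP (Module.End (ZMod p) (Polynomial (ZMod p))) p :=
  charP_of_injective_algebraMap' (ZMod p) p

lemma bellOp_pow_p :
    (bellOp (ZMod p)) ^ p
      = LinearMap.mulLeft (ZMod p) ((X : (ZMod p)[X]) ^ p) + bellOp (ZMod p) := by
  have hbin : (bellOp (ZMod p) + 1) ^ p = bellOp (ZMod p) ^ p + 1 := by
    rw [add_pow_char_of_commute _ (Commute.one_right _), one_pow]
  apply endExt
  intro n
  induction n with
  | zero =>
    have h1 : (bellOp (ZMod p) ^ p) ((1 : (ZMod p)[X])) = X ^ p + X := by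
      rw [← bellPoly_eq_iterate, bellPoly_p]
    simp only [pow_zero, LinearMap.add_apply, LinearMap.mulLeft_apply, h1]
    rw [bellOp_apply]
    simp
  | succ n ih =>
    have hXn : (X : (ZMod p)[X]) ^ (n + 1) = LinearMap.mulLeft (ZMod p) (X : (ZMod p)[X]) (X ^ n) := by
      rw [LinearMap.mulLeft_apply, pow_succ, mul_comm]
    rw [hXn, ← Module.End.mul_apply, bellOp_pow_comm_X, hbin]
    simp only [Module.End.mul_apply, LinearMap.add_apply, Module.End.one_apply, map_add,
      LinearMap.mulLeft_apply] at ih ⊢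
    rw [ih]
    have hT : bellOp (ZMod p) (X * X ^ n) = X * bellOp (ZMod p) (X ^ n) + X * X ^ n := by
      rw [bellOp_mul]
      simp only [derivative_X]
      ring
    rw [hT]
    ring

lemma bellOp_pow_p_pow (a : ℕ) (ha : 0 < a) :
    (bellOp (ZMod p)) ^ (p ^ a)
      = LinearMap.mulLeft (ZMod p) (∑ r ∈ Finset.Icc 1 a, (X : (ZMod p)[X]) ^ (p ^ r))
        + bellOp (ZMod p) := by
  induction a with
  | zero => omega
  | succ a ih =>
    rcases Nat.eq_zero_or_pos a with rfl | hapos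
    · simpa using bellOp_pow_p p
    · have hS : derivative (∑ r ∈ Finset.Icc 1 a, (X : (ZMod p)[X]) ^ (p ^ r)) = 0 := by
        rw [derivative_sum]
        refine Finset.sum_eq_zero fun r hr => ?_
        rw [derivative_X_pow]
        have h1 : 1 ≤ r := (Finset.mem_Icc.mp hr).1
        have : ((p ^ r : ℕ) : ZMod p) = 0 := by
          rw [Nat.cast_pow]
          rcases Nat.exists_eq_add_of_le h1 with ⟨s, rfl⟩
          rw [pow_add, pow_one, ZMod.natCast_self, zero_mul]
        rw [this, map_zero, zero_mul]
      have hcomm : Commute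
          (LinearMap.mulLeft (ZMod p) (∑ r ∈ Finset.Icc 1 a, (X : (ZMod p)[X]) ^ (p ^ r)))
          (bellOp (ZMod p)) := bellOp_comm_mulLeft _ hS
      rw [pow_succ, pow_mul, ih hapos, add_pow_char_of_commute _ hcomm, bellOp_pow_p]
      rw [← add_assoc]
      congr 1
      rw [LinearMap.pow_mulLeft]
      have hadd : LinearMap.mulLeft (ZMod p) ((∑ r ∈ Finset.Icc 1 a, (X : (ZMod p)[X]) ^ (p ^ r)) ^ p)
            + LinearMap.mulLeft (ZMod p) ((X : (ZMod p)[X]) ^ p)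
          = LinearMap.mulLeft (ZMod p)
            ((∑ r ∈ Finset.Icc 1 a, (X : (ZMod p)[X]) ^ (p ^ r)) ^ p + (X : (ZMod p)[X]) ^ p) := by
        refine LinearMap.ext fun f => ?_
        simp [add_mul]
      rw [hadd]
      congr 1
      rw [sum_pow_char]
      have hmapIcc : Finset.Icc 2 (a + 1) = (Finset.Icc 1 a).map (addRightEmbedding 1) :=
        (Finset.map_add_right_Icc 1 a 1).symm
      have hshift : (∑ r ∈ Finset.Icc 1 a, ((X : (ZMod p)[X]) ^ (p ^ r)) ^ p)
          = ∑ r ∈ Finset.Icc 2 (a + 1), (X : (ZMod p)[X]) ^ (p ^ r) := by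
        rw [hmapIcc, Finset.sum_map]
        refine Finset.sum_congr rfl fun r _ => ?_
        rw [← pow_mul, ← pow_succ]
        rfl
      rw [hshift]
      have : Finset.Icc 1 (a + 1) = insert 1 (Finset.Icc 2 (a + 1)) := by
        ext x
        simp only [Finset.mem_Icc, Finset.mem_insert]
        omega
      rw [this, Finset.sum_insert (by simp), pow_one]
      ring

lemma bellPoly_pow_mod (a : ℕ) (ha : 0 < a) :
    bellPoly (ZMod p) (p ^ a) = ∑ r ∈ Finset.range (a + 1), (X : (ZMod p)[X]) ^ (p ^ r) := by
  rw [bellPoly_eq_iterate, bellOp_pow_p_pow p a ha]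
  simp only [LinearMap.add_apply, LinearMap.mulLeft_apply, mul_one]
  rw [bellOp_apply]
  simp only [derivative_one, add_zero, mul_one]
  have : Finset.range (a + 1) = insert 0 (Finset.Icc 1 a) := by
    ext x
    simp [Finset.mem_range, Finset.mem_Icc, Finset.mem_insert]
    omega
  rw [this, Finset.sum_insert (by simp)]
  simp [add_comm]

end Fp

end BellAux

open Polynomial in
/-- For a prime `p` and `a ≥ 1`, `B_{p^a}(x) ≡ ∑_{r=0}^a x^{p^r}` mod `p·ℤ_p[x]`. -/
theorem bellPoly_prime_pow (p : ℕ) [Fact p.Prime] (a : ℕ) (ha : 0 < a) :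
    (p : Polynomial ℤ_[p]) ∣
      bellPoly ℤ_[p] (p ^ a) - ∑ r ∈ Finset.range (a + 1), X ^ (p ^ r) := by
  have hC : (p : Polynomial ℤ_[p]) = C (p : ℤ_[p]) := by simp
  rw [hC, C_dvd_iff_dvd_coeff]
  intro i
  have hker : ∀ c : ℤ_[p], PadicInt.toZMod c = 0 → (p : ℤ_[p]) ∣ c := by
    intro c hc
    have : c ∈ RingHom.ker (PadicInt.toZMod (p := p)) := hc
    rw [PadicInt.ker_toZMod, PadicInt.maximalIdeal_eq_span_p, Ideal.mem_span_singleton] at this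
    exact this
  apply hker
  have hmap : (bellPoly ℤ_[p] (p ^ a) - ∑ r ∈ Finset.range (a + 1), X ^ (p ^ r)).map
      (PadicInt.toZMod (p := p)) = 0 := by
    rw [Polynomial.map_sub]
    have h1 : (bellPoly ℤ_[p] (p ^ a)).map (PadicInt.toZMod (p := p))
        = bellPoly (ZMod p) (p ^ a) := by
      simp [bellPoly, Polynomial.map_sum, Polynomial.map_mul, Polynomial.map_pow, map_natCast]
    have h2 : ((∑ r ∈ Finset.range (a + 1), X ^ (p ^ r) : Polynomial ℤ_[p])).map
        (PadicInt.toZMod (p := p))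
        = ∑ r ∈ Finset.range (a + 1), (X : Polynomial (ZMod p)) ^ (p ^ r) := by
      simp [Polynomial.map_sum, Polynomial.map_pow]
    rw [h1, h2, BellAux.bellPoly_pow_mod p a ha, sub_self]
  have := congrArg (fun q => Polynomial.coeff q i) hmap
  simpa [Polynomial.coeff_map] using this
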